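/- Let A, B be n×n complex matrices with A B* = B A* and rank(A,B) = n, and assume every set of rank(B)-many distinct columns of B is linearly independent. Set r = rank B. Then there exist an invertible n×n matrix Q, an n×n permutation matrix P, a complex (n−r)×r matrix A₁ and a Hermitian r×r matrix A₂ such that Q·A·P = [[I_{n−r}, A₁],[0, A₂]] and Q·B·P = [[0, 0],[−A₁*, I_r]] in block form with respect to ℂ^n = ℂ^{n−r} × ℂ^r. -/

import Mathlib

open Matrix

theorem stmt6 (n : ℕ) (A B : Matrix (Fin n) (Fin n) ℂ)
    (hAB : A * Bᴴ = B * Aᴴ) (hfull : (Matrix.fromCols A B).rank = n)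
    (hcols : ∀ s : Finset (Fin n), s.card = B.rank →
      LinearIndependent ℂ (fun j : s => B.transpose (j : Fin n)))
    (h : n - B.rank + B.rank = n) :
    ∃ (Q P : Matrix (Fin n) (Fin n) ℂ)
      (A₁ : Matrix (Fin (n - B.rank)) (Fin B.rank) ℂ)
      (A₂ : Matrix (Fin B.rank) (Fin B.rank) ℂ),
      IsUnit Q ∧ (∃ σ : Equiv.Perm (Fin n), P = σ.permMatrix ℂ) ∧ A₂ᴴ = A₂ ∧
      Matrix.reindex ((finCongr h.symm).trans finSumFinEquiv.symm)
          ((finCongr h.symm).trans finSumFinEquiv.symm) (Q * A * P) =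
        Matrix.fromBlocks 1 A₁ 0 A₂ ∧
      Matrix.reindex ((finCongr h.symm).trans finSumFinEquiv.symm)
          ((finCongr h.symm).trans finSumFinEquiv.symm) (Q * B * P) =
        Matrix.fromBlocks 0 0 (-A₁ᴴ) 1 := by
  classical
  set r := B.rank with hr
  set m := n - r with hm
  set e : Fin n ≃ Fin m ⊕ Fin r := (finCongr h.symm).trans finSumFinEquiv.symm with he
  -- the span of the columns of `B`
  set W : Submodule ℂ (Fin n → ℂ) := Submodule.span ℂ (Set.range Bᵀ) with hW
  have hWr : Module.finrank ℂ W = r := (Matrix.rank_eq_finrank_span_cols B).symm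
  -- any `r` columns of `B` span `W`
  have hspanW : ∀ u : Finset (Fin n), u.card = r →
      Submodule.span ℂ (Bᵀ '' ↑u) = W := by
    intro u hu
    have hli : LinearIndependent ℂ (fun j : u => Bᵀ (j : Fin n)) := hcols u hu
    have hle : Submodule.span ℂ (Bᵀ '' ↑u) ≤ W := by
      apply Submodule.span_mono
      rintro - ⟨j, -, rfl⟩; exact ⟨j, rfl⟩
    have himg : Set.range (fun j : u => Bᵀ (j : Fin n)) = Bᵀ '' ↑u := by ext x; simp; exact Iff.rfl
    refine Submodule.eq_of_le_of_finrank_le hle ?_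
    rw [hWr, ← himg, finrank_span_eq_card hli, Fintype.card_coe, hu]
  -- columns of `A` and `B` jointly span everything
  have hcolsAB : Submodule.span ℂ (Set.range Aᵀ ∪ Set.range Bᵀ) = ⊤ := by
    have h1 : (Matrix.fromCols A B)ᵀ = Sum.elim Aᵀ Bᵀ := by
      ext (j | j) i <;> rfl
    have h2 : Module.finrank ℂ (Submodule.span ℂ (Set.range (Matrix.fromCols A B)ᵀ)) = (Matrix.fromCols A B).rank :=
      (Matrix.rank_eq_finrank_span_cols (Matrix.fromCols A B)).symm
    rw [hfull, h1] at h2; erw [Set.Sum.elim_range] at h2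
    exact Submodule.eq_top_of_finrank_eq (h2.trans (Module.finrank_fin_fun ℂ).symm)
  -- pick an independent `r`-subset of columns of `B`
  obtain ⟨s₀, -, hs₀⟩ := Finset.exists_subset_card_eq
    (by simpa using (by omega : r ≤ n) : r ≤ (Finset.univ : Finset (Fin n)).card)
  set S : Set (Fin n → ℂ) := Bᵀ '' ↑s₀ with hS
  have hSli : LinearIndependent ℂ ((↑) : S → (Fin n → ℂ)) := by
    rw [hS]; erw [Set.image_eq_range]
    exact (linearIndepOn_id_range_iff (hcols s₀ hs₀).injective).2 (hcols s₀ hs₀)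
  have hSW : Submodule.span ℂ S = W := hspanW s₀ hs₀
  have hSsub : S ⊆ Set.range Aᵀ ∪ Set.range Bᵀ := by
    rintro - ⟨j, -, rfl⟩; exact Or.inr ⟨j, rfl⟩
  -- extend to a basis of the whole space
  obtain ⟨b, hbt, hSb, hspanb, hbli⟩ : ∃ b ⊆ Set.range Aᵀ ∪ Set.range Bᵀ, S ⊆ b ∧
      Set.range Aᵀ ∪ Set.range Bᵀ ⊆ Submodule.span ℂ b ∧ LinearIndependent ℂ ((↑) : b → (Fin n → ℂ)) :=
    exists_linearIndepOn_id_extension hSli hSsub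
  have hbtop : Submodule.span ℂ b = ⊤ := by
    rw [eq_top_iff, ← hcolsAB]
    exact Submodule.span_le.2 hspanb
  have hbfin : b.Finite := hbli.setFinite
  have hbfin' : Fintype b := hbfin.fintype
  have hbcard : b.ncard = n := by
    have := finrank_span_eq_card hbli
    rw [Subtype.range_coe, hbtop, finrank_top, Module.finrank_fin_fun] at this
    rw [Set.ncard_eq_toFinset_card', Set.toFinset_card]
    exact this.symm
  have hScard : S.ncard = r := by
    have himg : Set.range (fun j : s₀ => Bᵀ (j : Fin n)) = S := by ext x; simp [hS]; exact Iff.rfl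
    rw [← himg, ← Nat.card_coe_set_eq,
      Nat.card_range_of_injective (hcols s₀ hs₀).injective, Nat.card_eq_fintype_card,
      Fintype.card_coe, hs₀]
  -- every element of `b \ S` is a column of `A`
  have hbA : ∀ v ∈ b \ S, ∃ j, Aᵀ j = v := by
    rintro v ⟨hvb, hvS⟩
    have hvnW : v ∉ W := by
      intro hvW
      have h1 : v ∉ Submodule.span ℂ (((↑) : b → (Fin n → ℂ)) '' {y : b | (y : Fin n → ℂ) ∈ S}) := by
        have := hbli.notMem_span_image (x := (⟨v, hvb⟩ : b))
          (s := {y : b | (y : Fin n → ℂ) ∈ S}) (by simpa using hvS)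
        simpa using this
      have h2 : ((↑) : b → (Fin n → ℂ)) '' {y : b | (y : Fin n → ℂ) ∈ S} = S := by
        ext x
        constructor
        · rintro ⟨⟨y, hy⟩, hy2, rfl⟩; exact hy2
        · intro hx; exact ⟨⟨x, hSb hx⟩, hx, rfl⟩
      rw [h2, hSW] at h1
      exact h1 hvW
    rcases hbt hvb with hvA | hvB
    · exact hvA
    · exact absurd (Submodule.subset_span hvB) hvnW
  -- build the index set `T` of chosen columns of `A`
  have hDfin : (b \ S).Finite := hbfin.subset Set.diff_subset
  set T : Finset (Fin n) := hDfin.toFinset.attach.image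
    (fun v => (hbA v.1 (hDfin.mem_toFinset.1 v.2)).choose) with hTdef
  have hTprop : ∀ v : hDfin.toFinset,
      Aᵀ ((hbA v.1 (hDfin.mem_toFinset.1 v.2)).choose) = (v : Fin n → ℂ) :=
    fun v => (hbA v.1 (hDfin.mem_toFinset.1 v.2)).choose_spec
  have hchinj : Function.Injective
      (fun v : hDfin.toFinset => (hbA v.1 (hDfin.mem_toFinset.1 v.2)).choose) := by
    intro v v' hvv'
    have h2 : Aᵀ ((hbA v.1 (hDfin.mem_toFinset.1 v.2)).choose)
        = Aᵀ ((hbA v'.1 (hDfin.mem_toFinset.1 v'.2)).choose) := congrArg Aᵀ hvv'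
    rw [hTprop v, hTprop v'] at h2
    exact Subtype.ext h2
  have hTcard : T.card = m := by
    rw [hTdef, Finset.card_image_of_injective _ hchinj, Finset.card_attach,
      ← Set.ncard_eq_toFinset_card _ hDfin, Set.ncard_diff hSb (hbfin.subset hSb),
      hbcard, hScard]
  have hTccard : Tᶜ.card = r := by
    rw [Finset.card_compl, hTcard, Fintype.card_fin]; omega
  set t : Fin m → Fin n := fun a => T.orderEmbOfFin hTcard a with ht
  set c : Fin r → Fin n := fun a => Tᶜ.orderEmbOfFin hTccard a with hc
  have htmem : ∀ a, t a ∈ T := fun a => Finset.orderEmbOfFin_mem T hTcard a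
  have hcmem : ∀ a, c a ∈ Tᶜ := fun a => Finset.orderEmbOfFin_mem Tᶜ hTccard a
  -- every element of `b \ S` is a column of `A` indexed by `T`
  have hbAT : ∀ v ∈ b \ S, ∃ a : Fin m, Aᵀ (t a) = v := by
    intro v hv
    have hvmem : v ∈ hDfin.toFinset := hDfin.mem_toFinset.2 hv
    have : (hbA v (hDfin.mem_toFinset.1 hvmem)).choose ∈ T := by
      rw [hTdef]
      exact Finset.mem_image.2 ⟨⟨v, hvmem⟩, Finset.mem_attach _ _, rfl⟩
    have hmem' : ((hbA v (hDfin.mem_toFinset.1 hvmem)).choose : Fin n)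
        ∈ (↑T : Set (Fin n)) := this
    rw [← Finset.range_orderEmbOfFin T hTcard] at hmem'
    obtain ⟨a, ha⟩ := hmem'
    exact ⟨a, by simp only [ht]; rw [ha, hTprop ⟨v, hvmem⟩]⟩
  -- columns of `B` indexed by `Tᶜ` span `W`
  have hcW : Submodule.span ℂ (Set.range fun a : Fin r => Bᵀ (c a)) = W := by
    have himg : (Set.range fun a : Fin r => Bᵀ (c a)) = Bᵀ '' ↑Tᶜ := by
      rw [← Finset.range_orderEmbOfFin Tᶜ hTccard]
      ext x
      constructor
      · rintro ⟨a, rfl⟩; exact ⟨c a, ⟨a, rfl⟩, rfl⟩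
      · rintro ⟨j, ⟨a, rfl⟩, rfl⟩; exact ⟨a, rfl⟩
    rw [himg]
    exact hspanW Tᶜ hTccard
  -- the key matrix `M`
  set M : Matrix (Fin n) (Fin n) ℂ := Matrix.of
    (fun i k => Sum.elim (fun a => A i (t a)) (fun a => B i (c a)) (e k)) with hM
  have hMcolA : ∀ (a : Fin m) (i : Fin n), M i (e.symm (Sum.inl a)) = A i (t a) := by
    intro a i; rw [hM]; simp
  have hMcolB : ∀ (a : Fin r) (i : Fin n), M i (e.symm (Sum.inr a)) = B i (c a) := by
    intro a i; rw [hM]; simp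
  -- `M` is invertible
  have hMu : IsUnit M := by
    rw [← Matrix.mulVec_surjective_iff_isUnit]
    have : LinearMap.range M.mulVecLin = ⊤ := by
      rw [Matrix.range_mulVecLin, eq_top_iff, ← hbtop]
      refine Submodule.span_le.2 ?_
      intro v hvb
      by_cases hvS : v ∈ S
      · have h1 : W ≤ Submodule.span ℂ (Set.range Mᵀ) := by
          rw [← hcW]
          refine Submodule.span_le.2 ?_
          rintro - ⟨a, rfl⟩
          refine Submodule.subset_span ⟨e.symm (Sum.inr a), ?_⟩
          ext i
          exact hMcolB a i
        exact h1 (hSW ▸ Submodule.subset_span hvS)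
      · obtain ⟨a, ha⟩ := hbAT v ⟨hvb, hvS⟩
        refine Submodule.subset_span ⟨e.symm (Sum.inl a), ?_⟩
        rw [← ha]
        ext i
        exact hMcolA a i
    intro y
    obtain ⟨x, hx⟩ := LinearMap.range_eq_top.1 this y
    exact ⟨x, hx⟩
  have hMdet : IsUnit M.det := (Matrix.isUnit_iff_isUnit_det M).mp hMu
  have hinv1 : M⁻¹ * M = 1 := Matrix.nonsing_inv_mul M hMdet
  have hinv2 : M * M⁻¹ = 1 := Matrix.mul_nonsing_inv M hMdet
  -- the permutation
  set f : Fin n → Fin n := fun k => Sum.elim t c (e k) with hf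
  have htinj : Function.Injective t := fun a a' haa' =>
    (T.orderEmbOfFin hTcard).injective haa'
  have hcinj : Function.Injective c := fun a a' haa' =>
    (Tᶜ.orderEmbOfFin hTccard).injective haa'
  have hdisj : ∀ (a : Fin m) (a' : Fin r), t a ≠ c a' := by
    intro a a' hth
    have := hcmem a'
    rw [← hth] at this
    exact (Finset.mem_compl.1 this) (htmem a)
  have hginj : Function.Injective (Sum.elim t c) := by
    rintro (a | a) (a' | a') hh <;> simp only [Sum.elim_inl, Sum.elim_inr] at hh
    · rw [htinj hh]
    · exact absurd hh (hdisj _ _)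
    · exact absurd hh.symm (hdisj _ _)
    · rw [hcinj hh]
  have hfinj : Function.Injective f := fun k k' hk => e.injective (hginj hk)
  have hfbij : Function.Bijective f := Finite.injective_iff_bijective.1 hfinj
  set σ : Equiv.Perm (Fin n) := (Equiv.ofBijective f hfbij).symm with hσ
  have hPmul : ∀ X : Matrix (Fin n) (Fin n) ℂ,
      X * σ.permMatrix ℂ = X.submatrix id f :=
    fun X => PEquiv.mul_toMatrix_toPEquiv X σ
  -- column identities
  have hQA : ∀ (x : Fin n) (a : Fin m),
      (M⁻¹ * A) x (t a) = (1 : Matrix (Fin n) (Fin n) ℂ) x (e.symm (Sum.inl a)) := by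
    intro x a
    rw [← hinv1]
    simp only [Matrix.mul_apply]
    exact Finset.sum_congr rfl fun k _ => by rw [hMcolA a k]
  have hQB : ∀ (x : Fin n) (a : Fin r),
      (M⁻¹ * B) x (c a) = (1 : Matrix (Fin n) (Fin n) ℂ) x (e.symm (Sum.inr a)) := by
    intro x a
    rw [← hinv1]
    simp only [Matrix.mul_apply]
    exact Finset.sum_congr rfl fun k _ => by rw [hMcolB a k]
  have hone : ∀ p q : Fin m ⊕ Fin r, (1 : Matrix (Fin n) (Fin n) ℂ) (e.symm p) (e.symm q)
      = (1 : Matrix (Fin m ⊕ Fin r) (Fin m ⊕ Fin r) ℂ) p q := by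
    intro p q
    by_cases hpq : p = q
    · subst hpq; simp [Matrix.one_apply]
    · rw [Matrix.one_apply_ne fun hcc => hpq (e.symm.injective hcc), Matrix.one_apply_ne hpq]
  have hcolmul : ∀ (X Y : Matrix (Fin n) (Fin n) ℂ) (j x : Fin n),
      (X * Y) x j = X.mulVecLin (Yᵀ j) x := by
    intro X Y j x
    simp [Matrix.mul_apply, Matrix.mulVecLin_apply, Matrix.mulVec, dotProduct,
      Matrix.transpose_apply]
  have hQBT : ∀ (a' : Fin m) (a : Fin m),
      (M⁻¹ * B) (e.symm (Sum.inl a')) (t a) = 0 := by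
    intro a' a
    have hmem : Bᵀ (t a) ∈ Submodule.span ℂ (Set.range fun i : Fin r => Bᵀ (c i)) := by
      rw [hcW]; exact Submodule.subset_span ⟨t a, rfl⟩
    obtain ⟨coef, hcoef⟩ := (Submodule.mem_span_range_iff_exists_fun ℂ).1 hmem
    calc (M⁻¹ * B) (e.symm (Sum.inl a')) (t a)
        = M⁻¹.mulVecLin (Bᵀ (t a)) (e.symm (Sum.inl a')) := hcolmul _ _ _ _
      _ = (∑ i : Fin r, coef i • M⁻¹.mulVecLin (Bᵀ (c i))) (e.symm (Sum.inl a')) := by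
          rw [← hcoef]; simp only [map_sum, _root_.map_smul]
      _ = ∑ i : Fin r, coef i • (M⁻¹ * B) (e.symm (Sum.inl a')) (c i) := by
          simp only [Finset.sum_apply, Pi.smul_apply]
          exact Finset.sum_congr rfl fun i _ => by rw [hcolmul]
      _ = 0 := by
          refine Finset.sum_eq_zero fun i _ => ?_
          rw [hQB, hone, Matrix.one_apply_ne (by simp), smul_zero]
  -- the blocks
  set A₁ : Matrix (Fin m) (Fin r) ℂ :=
    Matrix.of (fun a a' => (M⁻¹ * A) (e.symm (Sum.inl a)) (c a')) with hA₁
  set A₂ : Matrix (Fin r) (Fin r) ℂ :=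
    Matrix.of (fun a a' => (M⁻¹ * A) (e.symm (Sum.inr a)) (c a')) with hA₂def
  set Z : Matrix (Fin r) (Fin m) ℂ :=
    Matrix.of (fun a a' => (M⁻¹ * B) (e.symm (Sum.inr a)) (t a')) with hZdef
  have hGA : Matrix.reindex e e (M⁻¹ * A * σ.permMatrix ℂ) = Matrix.fromBlocks 1 A₁ 0 A₂ := by
    rw [hPmul]
    ext p q
    simp only [Matrix.reindex_apply, Matrix.submatrix_apply, id_eq]
    have hfq : f (e.symm q) = Sum.elim t c q := by
      simp only [hf, Equiv.apply_symm_apply]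
    rw [hfq]
    rcases q with a | a
    · simp only [Sum.elim_inl]
      rw [hQA, hone]
      rcases p with a' | a'
      · by_cases haa : a' = a
        · subst haa; simp [Matrix.one_apply]
        · rw [Matrix.one_apply_ne (by simpa using haa)]
          simp [Matrix.one_apply, haa]
      · rw [Matrix.one_apply_ne (by simp)]
        simp
    · rcases p with a' | a'
      · simp only [Sum.elim_inr, Matrix.fromBlocks_apply₁₂]
        rw [hA₁]; rfl
      · simp only [Sum.elim_inr, Matrix.fromBlocks_apply₂₂]
        rw [hA₂def]; rfl
  have hGB : Matrix.reindex e e (M⁻¹ * B * σ.permMatrix ℂ) = Matrix.fromBlocks 0 0 Z 1 := by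
    rw [hPmul]
    ext p q
    simp only [Matrix.reindex_apply, Matrix.submatrix_apply, id_eq]
    have hfq : f (e.symm q) = Sum.elim t c q := by
      simp only [hf, Equiv.apply_symm_apply]
    rw [hfq]
    rcases q with a | a
    · rcases p with a' | a'
      · simp only [Sum.elim_inl, Matrix.fromBlocks_apply₁₁]
        rw [hQBT]; simp
      · simp only [Sum.elim_inl, Matrix.fromBlocks_apply₂₁]
        rw [hZdef]; rfl
    · simp only [Sum.elim_inr]
      rw [hQB, hone]
      rcases p with a' | a'
      · rw [Matrix.one_apply_ne (by simp)]
        simp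
      · by_cases haa : a' = a
        · subst haa; simp [Matrix.one_apply]
        · rw [Matrix.one_apply_ne (by simpa using haa)]
          simp [Matrix.one_apply, haa]
  -- the symmetry relation between the blocks
  have hcore : (M⁻¹ * A * σ.permMatrix ℂ) * (M⁻¹ * B * σ.permMatrix ℂ)ᴴ
      = (M⁻¹ * B * σ.permMatrix ℂ) * (M⁻¹ * A * σ.permMatrix ℂ)ᴴ := by
    rw [hPmul, hPmul, Matrix.conjTranspose_submatrix, Matrix.conjTranspose_submatrix,
      ← Matrix.submatrix_mul _ _ id f id hfbij, ← Matrix.submatrix_mul _ _ id f id hfbij,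
      Matrix.submatrix_id_id, Matrix.submatrix_id_id]
    simp only [Matrix.conjTranspose_mul, Matrix.mul_assoc]
    rw [← Matrix.mul_assoc A, ← Matrix.mul_assoc B, hAB]
  have hsym : (Matrix.fromBlocks 1 A₁ 0 A₂ : Matrix (Fin m ⊕ Fin r) (Fin m ⊕ Fin r) ℂ) *
        (Matrix.fromBlocks 0 0 Z 1)ᴴ
      = Matrix.fromBlocks 0 0 Z 1 * (Matrix.fromBlocks 1 A₁ 0 A₂)ᴴ := by
    rw [← hGA, ← hGB, Matrix.reindex_apply, Matrix.reindex_apply,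
      Matrix.conjTranspose_submatrix, Matrix.conjTranspose_submatrix,
      Matrix.submatrix_mul_equiv, Matrix.submatrix_mul_equiv, hcore]
  have hLHS : (Matrix.fromBlocks 1 A₁ 0 A₂ : Matrix (Fin m ⊕ Fin r) (Fin m ⊕ Fin r) ℂ) *
        (Matrix.fromBlocks 0 0 Z 1)ᴴ
      = Matrix.fromBlocks 0 (Zᴴ + A₁) 0 A₂ := by
    rw [Matrix.fromBlocks_conjTranspose, Matrix.fromBlocks_multiply]
    simp
  have hRHS : (Matrix.fromBlocks 0 0 Z 1 : Matrix (Fin m ⊕ Fin r) (Fin m ⊕ Fin r) ℂ) *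
        (Matrix.fromBlocks 1 A₁ 0 A₂)ᴴ
      = Matrix.fromBlocks 0 0 (Z + A₁ᴴ) A₂ᴴ := by
    rw [Matrix.fromBlocks_conjTranspose, Matrix.fromBlocks_multiply]
    simp
  rw [hLHS, hRHS] at hsym
  have hZA : Zᴴ + A₁ = 0 := by
    have := congrArg Matrix.toBlocks₁₂ hsym
    simpa [Matrix.toBlocks_fromBlocks₁₂] using this
  have hA2 : A₂ = A₂ᴴ := by
    have := congrArg Matrix.toBlocks₂₂ hsym
    simpa [Matrix.toBlocks_fromBlocks₂₂] using this
  have hZ : Z = -A₁ᴴ := by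
    have h1 : Zᴴ = -A₁ := eq_neg_of_add_eq_zero_left hZA
    calc Z = Zᴴᴴ := (Matrix.conjTranspose_conjTranspose Z).symm
      _ = (-A₁)ᴴ := by rw [h1]
      _ = -A₁ᴴ := Matrix.conjTranspose_neg A₁
  refine ⟨M⁻¹, σ.permMatrix ℂ, A₁, A₂, ⟨⟨M⁻¹, M, hinv1, hinv2⟩, rfl⟩, ⟨σ, rfl⟩,
    hA2.symm, hGA, ?_⟩
  rw [← hZ]
  exact hGB
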